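/- For α ∈ (0,2), the second difference of the fGn autocovariance satisfies γ(k+n) - 2γ(k) + γ(k-n) = O(k^{α-3}) as k → ∞, for each fixed n ∈ ℕ, where γ(k) = (1/2)(|k+1|^α - 2|k|^α + |k-1|^α). Consequently, for each n, the sequence k ↦ γ(k+n) - 2γ(k) + γ(k-n) is absolutely summable and square summable. -/

import Mathlib

open Filter Asymptotics Set

-- order-1 second-difference bound via two MVTs
private lemma sd1 (g g' : ℝ → ℝ) (x h M : ℝ) (hh : 0 < h)
    (hg : ∀ t ∈ Icc (x - h) (x + h), HasDerivAt g (g' t) t)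
    (hM : ∀ t ∈ Ioo (x - h) (x + h), |g' t| ≤ M) :
    |g (x + h) - 2 * g x + g (x - h)| ≤ 2 * h * M := by
  have h1 : x < x + h := by linarith
  have h2 : x - h < x := by linarith
  obtain ⟨c1, hc1, e1⟩ := exists_hasDerivAt_eq_slope g g' h1
    (fun t ht => (hg t ⟨by linarith [ht.1], ht.2⟩).continuousAt.continuousWithinAt)
    (fun t ht => hg t ⟨by linarith [ht.1], le_of_lt ht.2⟩)
  obtain ⟨c2, hc2, e2⟩ := exists_hasDerivAt_eq_slope g g' h2
    (fun t ht => (hg t ⟨ht.1, by linarith [ht.2]⟩).continuousAt.continuousWithinAt)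
    (fun t ht => hg t ⟨le_of_lt ht.1, by linarith [ht.2]⟩)
  have hxh : x + h - x = h := by ring
  have hxh2 : x - (x - h) = h := by ring
  rw [hxh] at e1; rw [hxh2] at e2
  have E1 : g (x + h) - g x = h * g' c1 := by rw [e1]; field_simp
  have E2 : g x - g (x - h) = h * g' c2 := by rw [e2]; field_simp
  have hb1 : |g' c1| ≤ M := hM c1 ⟨by linarith [hc1.1], hc1.2⟩
  have hb2 : |g' c2| ≤ M := hM c2 ⟨hc2.1, by linarith [hc2.2]⟩
  have : g (x + h) - 2 * g x + g (x - h) = h * g' c1 - h * g' c2 := by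
    linarith [E1, E2]
  rw [this]
  calc |h * g' c1 - h * g' c2| ≤ |h * g' c1| + |h * g' c2| := abs_sub _ _
    _ = h * |g' c1| + h * |g' c2| := by
        rw [abs_mul, abs_mul, abs_of_pos hh]
    _ ≤ h * M + h * M := by
        have := abs_nonneg (g' c1)
        gcongr
    _ = 2 * h * M := by ring

-- order-2 second-difference bound via three MVTs
private lemma sd2 (g g' g'' : ℝ → ℝ) (x h M : ℝ) (hh : 0 < h)
    (hg : ∀ t ∈ Icc (x - h) (x + h), HasDerivAt g (g' t) t)
    (hg' : ∀ t ∈ Icc (x - h) (x + h), HasDerivAt g' (g'' t) t)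
    (hM : ∀ t ∈ Ioo (x - h) (x + h), |g'' t| ≤ M) :
    |g (x + h) - 2 * g x + g (x - h)| ≤ 2 * h ^ 2 * M := by
  have h1 : x < x + h := by linarith
  have h2 : x - h < x := by linarith
  obtain ⟨c1, hc1, e1⟩ := exists_hasDerivAt_eq_slope g g' h1
    (fun t ht => (hg t ⟨by linarith [ht.1], ht.2⟩).continuousAt.continuousWithinAt)
    (fun t ht => hg t ⟨by linarith [ht.1], le_of_lt ht.2⟩)
  obtain ⟨c2, hc2, e2⟩ := exists_hasDerivAt_eq_slope g g' h2
    (fun t ht => (hg t ⟨ht.1, by linarith [ht.2]⟩).continuousAt.continuousWithinAt)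
    (fun t ht => hg t ⟨le_of_lt ht.1, by linarith [ht.2]⟩)
  have hxh : x + h - x = h := by ring
  have hxh2 : x - (x - h) = h := by ring
  rw [hxh] at e1; rw [hxh2] at e2
  have E1 : g (x + h) - g x = h * g' c1 := by rw [e1]; field_simp
  have E2 : g x - g (x - h) = h * g' c2 := by rw [e2]; field_simp
  have hc21 : c2 < c1 := by linarith [hc1.1, hc2.2]
  obtain ⟨c3, hc3, e3⟩ := exists_hasDerivAt_eq_slope g' g'' hc21
    (fun t ht => (hg' t ⟨by linarith [ht.1, hc2.1], by linarith [ht.2, hc1.2]⟩).continuousAt.continuousWithinAt)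
    (fun t ht => hg' t ⟨by linarith [ht.1, hc2.1], by linarith [ht.2, hc1.2]⟩)
  have E3 : g' c1 - g' c2 = (c1 - c2) * g'' c3 := by
    rw [e3, mul_div_cancel₀ _ (by linarith : c1 - c2 ≠ 0)]
  have hb3 : |g'' c3| ≤ M := hM c3 ⟨by linarith [hc3.1, hc2.1], by linarith [hc3.2, hc1.2]⟩
  have hMnn : 0 ≤ M := le_trans (abs_nonneg _) hb3
  have : g (x + h) - 2 * g x + g (x - h) = h * ((c1 - c2) * g'' c3) := by
    rw [← E3]; linarith [E1, E2]
  rw [this]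
  have hcc : |c1 - c2| ≤ 2 * h := by
    rw [abs_of_pos (by linarith : (0:ℝ) < c1 - c2)]
    linarith [hc1.2, hc2.1]
  calc |h * ((c1 - c2) * g'' c3)| = h * (|c1 - c2| * |g'' c3|) := by
        rw [abs_mul, abs_mul, abs_of_pos hh]
    _ ≤ h * ((2 * h) * M) := by
        have h0 : 0 ≤ |c1 - c2| := abs_nonneg _
        gcongr
    _ = 2 * h ^ 2 * M := by ring


private lemma deriv_shift (p c t : ℝ) (h : 0 < t + c) :
    HasDerivAt (fun s : ℝ => (s + c) ^ p) (p * (t + c) ^ (p - 1)) t := by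
  have h1 : HasDerivAt (fun s : ℝ => s + c) 1 t := (hasDerivAt_id t).add_const c
  have h2 := Real.hasDerivAt_rpow_const (p := p) (x := t + c) (Or.inl (ne_of_gt h))
  have h3 := h2.comp t h1
  rw [mul_one] at h3
  exact h3

private lemma deriv_G (p t : ℝ) (ht : 1 < t) :
    HasDerivAt (fun s : ℝ => (s + 1) ^ p - 2 * s ^ p + (s - 1) ^ p)
      (p * ((t + 1) ^ (p - 1) - 2 * t ^ (p - 1) + (t - 1) ^ (p - 1))) t := by
  have h1 := deriv_shift p 1 t (by linarith)
  have h0 : HasDerivAt (fun s : ℝ => s ^ p) (p * t ^ (p - 1)) t :=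
    Real.hasDerivAt_rpow_const (Or.inl (by linarith : t ≠ 0))
  have h2 : HasDerivAt (fun s : ℝ => (s - 1) ^ p) (p * (t - 1) ^ (p - 1)) t := by
    have := deriv_shift p (-1) t (by linarith)
    simpa [sub_eq_add_neg] using this
  have := (h1.sub (h0.const_mul 2)).add h2
  refine this.congr_deriv ?_
  ring

private lemma inner_bd (p : ℝ) (hp : p ≤ 2) (x : ℝ) (hx : 2 ≤ x) :
    |(x + 1) ^ p - 2 * x ^ p + (x - 1) ^ p| ≤ 2 * (|p| * |p - 1|) * (x - 1) ^ (p - 2) := by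
  have key := sd2 (fun s : ℝ => s ^ p) (fun s : ℝ => p * s ^ (p - 1))
      (fun s : ℝ => p * ((p - 1) * s ^ (p - 2))) x 1
      ((|p| * |p - 1|) * (x - 1) ^ (p - 2)) one_pos
      (fun t ht => Real.hasDerivAt_rpow_const (Or.inl (by simp only [mem_Icc] at ht; nlinarith [ht.1] : t ≠ 0)))
      (fun t ht => by
        simp only [mem_Icc] at ht
        have ht0 : t ≠ 0 := by nlinarith [ht.1]
        have := (Real.hasDerivAt_rpow_const (p := p - 1) (x := t) (Or.inl ht0)).const_mul p
        simpa [show p - 1 - 1 = p - 2 by ring] using this)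
      (fun t ht => by
        simp only [mem_Ioo] at ht
        have ht0 : 0 < t := by linarith [ht.1]
        have htp : t ^ (p - 2) ≤ (x - 1) ^ (p - 2) :=
          Real.rpow_le_rpow_of_nonpos (by linarith : (0:ℝ) < x - 1) (by linarith [ht.1]) (by linarith)
        have hnn : (0:ℝ) ≤ t ^ (p - 2) := Real.rpow_nonneg (le_of_lt ht0) _
        calc |p * ((p - 1) * t ^ (p - 2))| = |p| * |p - 1| * t ^ (p - 2) := by
              rw [abs_mul, abs_mul, abs_of_nonneg hnn, mul_assoc]
          _ ≤ |p| * |p - 1| * (x - 1) ^ (p - 2) := by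
              have := abs_nonneg p; have := abs_nonneg (p-1); gcongr)
  calc |(x + 1) ^ p - 2 * x ^ p + (x - 1) ^ p| ≤ 2 * 1 ^ 2 * ((|p| * |p - 1|) * (x - 1) ^ (p - 2)) := key
    _ = 2 * (|p| * |p - 1|) * (x - 1) ^ (p - 2) := by ring


private lemma outer_bd (α : ℝ) (hα : α ∈ Set.Ioo (0 : ℝ) 2) (n : ℕ) (hn : 1 ≤ n) (x : ℝ)
    (hx : 2 * n + 4 ≤ x) :
    |((x + n + 1) ^ α - 2 * (x + n) ^ α + (x + n - 1) ^ α)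
      - 2 * ((x + 1) ^ α - 2 * x ^ α + (x - 1) ^ α)
      + ((x - n + 1) ^ α - 2 * (x - n) ^ α + (x - n - 1) ^ α)|
      ≤ 2 * n * (|α| * (2 * (|α - 1| * |α - 2|) * (x - n - 1) ^ (α - 3))) := by
  obtain ⟨hα0, hα2⟩ := hα
  have hn1 : (1:ℝ) ≤ (n:ℝ) := by exact_mod_cast hn
  have hnpos : (0:ℝ) < (n:ℝ) := by linarith
  have key := sd1 (fun s : ℝ => (s + 1) ^ α - 2 * s ^ α + (s - 1) ^ α)
      (fun s : ℝ => α * ((s + 1) ^ (α - 1) - 2 * s ^ (α - 1) + (s - 1) ^ (α - 1))) x (n : ℝ)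
      (|α| * (2 * (|α - 1| * |α - 2|) * (x - n - 1) ^ (α - 3))) hnpos
      (fun t ht => by
        simp only [mem_Icc] at ht
        exact deriv_G α t (by linarith [ht.1]))
      (fun t ht => by
        simp only [mem_Ioo] at ht
        have ht2 : (2:ℝ) ≤ t := by linarith [ht.1]
        have hib := inner_bd (α - 1) (by linarith) t ht2
        have hmain : |(t + 1) ^ (α - 1) - 2 * t ^ (α - 1) + (t - 1) ^ (α - 1)|
            ≤ 2 * (|α - 1| * |α - 2|) * (x - n - 1) ^ (α - 3) := by
          have e1 : α - 1 - 1 = α - 2 := by ring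
          have e2 : α - 1 - 2 = α - 3 := by ring
          rw [e1, e2] at hib
          refine le_trans hib ?_
          have : (t - 1) ^ (α - 3) ≤ (x - n - 1) ^ (α - 3) :=
            Real.rpow_le_rpow_of_nonpos (by linarith : (0:ℝ) < x - n - 1)
              (by linarith [ht.1]) (by linarith)
          have h1 := abs_nonneg (α - 1); have h2 := abs_nonneg (α - 2)
          gcongr
        rw [abs_mul]
        have := abs_nonneg α
        gcongr)
  exact key


private lemma key_bd (α : ℝ) (hα : α ∈ Set.Ioo (0 : ℝ) 2) (γ : ℝ → ℝ)
    (hγ : ∀ k : ℝ, γ k = (1 / 2) * (|k + 1| ^ α - 2 * |k| ^ α + |k - 1| ^ α)) (n : ℕ)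
    (hn : 1 ≤ n) (x : ℝ) (hx : 2 * n + 4 ≤ x) :
    |γ (x + n) - 2 * γ x + γ (x - n)| ≤
      ((n * (|α| * (2 * (|α - 1| * |α - 2|)))) * (2:ℝ) ^ (3 - α)) * x ^ (α - 3) := by
  obtain ⟨hα0, hα2⟩ := hα
  have hn1 : (1:ℝ) ≤ (n:ℝ) := by exact_mod_cast hn
  have hx0 : (0:ℝ) < x := by linarith
  -- remove absolute values
  have hE : γ (x + n) - 2 * γ x + γ (x - n) = (1/2) *
      (((x + n + 1) ^ α - 2 * (x + n) ^ α + (x + n - 1) ^ α)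
      - 2 * ((x + 1) ^ α - 2 * x ^ α + (x - 1) ^ α)
      + ((x - n + 1) ^ α - 2 * (x - n) ^ α + (x - n - 1) ^ α)) := by
    rw [hγ (x + n), hγ x, hγ (x - n),
      abs_of_nonneg (by linarith : (0:ℝ) ≤ x + n + 1),
      abs_of_nonneg (by linarith : (0:ℝ) ≤ x + n),
      abs_of_nonneg (by linarith : (0:ℝ) ≤ x + n - 1),
      abs_of_nonneg (by linarith : (0:ℝ) ≤ x + 1),
      abs_of_nonneg (by linarith : (0:ℝ) ≤ x),
      abs_of_nonneg (by linarith : (0:ℝ) ≤ x - 1),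
      abs_of_nonneg (by linarith : (0:ℝ) ≤ x - n + 1),
      abs_of_nonneg (by linarith : (0:ℝ) ≤ x - n),
      abs_of_nonneg (by linarith : (0:ℝ) ≤ x - n - 1)]
    ring
  have hob := outer_bd α ⟨hα0, hα2⟩ n hn x hx
  have hpow : (x - n - 1) ^ (α - 3) ≤ (2:ℝ) ^ (3 - α) * x ^ (α - 3) := by
    have h1 : (x - n - 1) ^ (α - 3) ≤ (x / 2) ^ (α - 3) :=
      Real.rpow_le_rpow_of_nonpos (by linarith) (by linarith) (by linarith)
    have h2 : (x / 2 : ℝ) ^ (α - 3) = (2:ℝ) ^ (3 - α) * x ^ (α - 3) := by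
      rw [Real.div_rpow (by linarith) (by norm_num), div_eq_mul_inv,
        ← Real.rpow_neg (by norm_num), neg_sub, mul_comm]
    linarith [h1, h2.le, h2.ge]
  rw [hE, abs_mul, abs_of_nonneg (by norm_num : (0:ℝ) ≤ (1:ℝ)/2)]
  have hCnn : (0:ℝ) ≤ 2 * n * (|α| * (2 * (|α - 1| * |α - 2|))) := by positivity
  calc (1/2:ℝ) * |_| ≤ (1/2) * (2 * n * (|α| * (2 * (|α - 1| * |α - 2|) * (x - n - 1) ^ (α - 3)))) := by
        gcongr
    _ ≤ (1/2) * (2 * n * (|α| * (2 * (|α - 1| * |α - 2|) * ((2:ℝ) ^ (3 - α) * x ^ (α - 3))))) := by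
        have := abs_nonneg α; have := abs_nonneg (α-1); have := abs_nonneg (α-2)
        gcongr
    _ = ((n * (|α| * (2 * (|α - 1| * |α - 2|)))) * (2:ℝ) ^ (3 - α)) * x ^ (α - 3) := by
        ring


theorem stmt_8 (α : ℝ) (hα : α ∈ Set.Ioo (0 : ℝ) 2) (γ : ℝ → ℝ)
    (hγ : ∀ k : ℝ, γ k = (1 / 2) * (|k + 1| ^ α - 2 * |k| ^ α + |k - 1| ^ α)) (n : ℕ) :
    ((fun k : ℝ => γ (k + n) - 2 * γ k + γ (k - n)) =O[atTop] fun k : ℝ => k ^ (α - 3)) ∧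
    Summable (fun k : ℕ => |γ ((k : ℝ) + 1 + n) - 2 * γ ((k : ℝ) + 1) + γ ((k : ℝ) + 1 - n)|) ∧
    Summable (fun k : ℕ => (γ ((k : ℝ) + 1 + n) - 2 * γ ((k : ℝ) + 1) + γ ((k : ℝ) + 1 - n)) ^ 2) := by
  obtain ⟨hα0, hα2⟩ := hα
  rcases Nat.eq_zero_or_pos n with hn0 | hn
  · subst hn0
    have hz : ∀ x : ℝ, γ (x + (0:ℕ)) - 2 * γ x + γ (x - (0:ℕ)) = 0 := by
      intro x
      simp only [Nat.cast_zero, add_zero, sub_zero]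
      ring
    refine ⟨?_, ?_, ?_⟩
    · have heq : (fun k : ℝ => γ (k + (0:ℕ)) - 2 * γ k + γ (k - (0:ℕ))) = fun _ : ℝ => (0:ℝ) :=
        funext hz
      rw [heq]
      exact isBigO_zero _ _
    · simp only [hz, abs_zero]
      exact summable_zero
    · simp only [hz]
      simpa using summable_zero
  · set C : ℝ := ((n : ℝ) * (|α| * (2 * (|α - 1| * |α - 2|)))) * (2:ℝ) ^ (3 - α) with hCdef
    have hC : 0 ≤ C := by positivity
    have hO : (fun k : ℝ => γ (k + n) - 2 * γ k + γ (k - n)) =O[atTop] fun k : ℝ => k ^ (α - 3) := by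
      rw [isBigO_iff]
      refine ⟨C, ?_⟩
      filter_upwards [eventually_ge_atTop (2*(n:ℝ)+4)] with x hx
      have hn0 : (0:ℝ) ≤ (n:ℝ) := Nat.cast_nonneg n
      have hx0 : (0:ℝ) < x := by linarith
      rw [Real.norm_eq_abs, Real.norm_eq_abs, abs_of_nonneg (Real.rpow_nonneg hx0.le _)]
      exact key_bd α ⟨hα0, hα2⟩ γ hγ n hn x hx
    have habs : Summable (fun k : ℕ =>
        |γ ((k : ℝ) + 1 + n) - 2 * γ ((k : ℝ) + 1) + γ ((k : ℝ) + 1 - n)|) := by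
      apply summable_of_isBigO_nat (g := fun k : ℕ => (k:ℝ) ^ (α-3))
        (Real.summable_nat_rpow.2 (by linarith))
      rw [isBigO_iff]
      refine ⟨C, ?_⟩
      filter_upwards [eventually_ge_atTop (2*n+4)] with k hk
      have hkR : (2*(n:ℝ)+4) ≤ (k:ℝ) := by exact_mod_cast hk
      have hn0 : (0:ℝ) ≤ (n:ℝ) := Nat.cast_nonneg n
      have hk0 : (0:ℝ) < (k:ℝ) := by linarith
      have hb := key_bd α ⟨hα0, hα2⟩ γ hγ n hn ((k:ℝ)+1) (by linarith)
      have hmono : ((k:ℝ)+1) ^ (α-3) ≤ (k:ℝ) ^ (α-3) :=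
        Real.rpow_le_rpow_of_nonpos hk0 (by linarith) (by linarith)
      rw [Real.norm_eq_abs, Real.norm_eq_abs, abs_abs,
        abs_of_nonneg (Real.rpow_nonneg hk0.le _)]
      calc |γ ((k : ℝ) + 1 + n) - 2 * γ ((k : ℝ) + 1) + γ ((k : ℝ) + 1 - n)|
          ≤ C * ((k:ℝ)+1) ^ (α-3) := hb
        _ ≤ C * (k:ℝ) ^ (α-3) := mul_le_mul_of_nonneg_left hmono hC
    refine ⟨hO, habs, ?_⟩
    apply summable_of_isBigO_nat habs
    rw [isBigO_iff]
    refine ⟨1, ?_⟩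
    have hto := habs.tendsto_atTop_zero
    filter_upwards [hto.eventually (gt_mem_nhds (by norm_num : (0:ℝ) < 1))] with k hk1
    rw [Real.norm_eq_abs, Real.norm_eq_abs, abs_abs,
      abs_of_nonneg (sq_nonneg _), sq, ← abs_mul_abs_self, one_mul]
    nlinarith [abs_nonneg (γ ((k : ℝ) + 1 + n) - 2 * γ ((k : ℝ) + 1) + γ ((k : ℝ) + 1 - n))]
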